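/- For every δ > 0 there exists a constant C > 0 such that the following holds for all positive integers n and all 0 ≤ t ≤ n. Let B be a bipartite graph with vertex parts X = {x_1,…,x_n} and Y = {y_1,…,y_n} in which every vertex of X has degree exactly n−t, and let X* ⊆ X and Y* ⊆ Y be given subsets. If π is a uniformly random permutation of {1,…,n}, then with probability at least 1 − C/n, the number of indices i ∈ {1,…,n} such that x_i ∈ X*, y_{π(i)} ∈ Y*, and x_i y_{π(i)} is an edge of B is at least |X*|(|Y*|−t)/n − δn. -/

import Mathlib

open Finset Equiv

private lemma fiber_split {n : ℕ} (i : Fin n) (s : Finset (Equiv.Perm (Fin n))) :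
    s.card = ∑ j' : Fin n, (s.filter fun π => π i = j').card :=
  Finset.card_eq_sum_card_fiberwise (f := fun π : Equiv.Perm (Fin n) => π i) (fun _ _ => Finset.mem_univ _)

private lemma fix_card_eq {n : ℕ} (i j j' : Fin n) :
    (univ.filter fun π : Perm (Fin n) => π i = j).card
      = (univ.filter fun π : Perm (Fin n) => π i = j').card := by
  classical
  refine Finset.card_nbij' (fun π => Equiv.swap j j' * π) (fun π => Equiv.swap j j' * π)
    ?_ ?_ ?_ ?_
  · intro π hπ
    simp only [Finset.mem_coe, mem_filter, mem_univ, true_and] at hπ ⊢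
    simp [Perm.mul_apply, hπ]
  · intro π hπ
    simp only [Finset.mem_coe, mem_filter, mem_univ, true_and] at hπ ⊢
    simp [Perm.mul_apply, hπ, Equiv.swap_apply_right]
  · intro π _; simp [← mul_assoc]
  · intro π _; simp [← mul_assoc]

private lemma card_perm_fix {n : ℕ} (i j : Fin n) :
    (univ.filter fun π : Perm (Fin n) => π i = j).card = (n - 1).factorial := by
  classical
  have hn : 0 < n := i.pos
  have htot := fiber_split i (univ : Finset (Perm (Fin n)))
  have hsum : ∑ j' : Fin n, (univ.filter fun π : Perm (Fin n) => π i = j').card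
      = n * (univ.filter fun π : Perm (Fin n) => π i = j).card := by
    rw [Finset.sum_congr rfl (fun j' _ => fix_card_eq i j' j), Finset.sum_const,
      Finset.card_univ, Fintype.card_fin, smul_eq_mul]
  have hcard : (univ : Finset (Perm (Fin n))).card = n.factorial := by
    rw [Finset.card_univ, Fintype.card_perm, Fintype.card_fin]
  have h2 : n * (univ.filter fun π : Perm (Fin n) => π i = j).card
      = n * (n-1).factorial := by
    rw [← hsum, ← htot, hcard, Nat.mul_factorial_pred hn.ne']
  exact Nat.eq_of_mul_eq_mul_left hn h2

private lemma fix2_card_eq {n : ℕ} (i i' a : Fin n) {b b' : Fin n} (hb : b ≠ a) (hb' : b' ≠ a) :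
    (univ.filter fun π : Perm (Fin n) => π i = a ∧ π i' = b).card
      = (univ.filter fun π : Perm (Fin n) => π i = a ∧ π i' = b').card := by
  classical
  refine Finset.card_nbij' (fun π => Equiv.swap b b' * π) (fun π => Equiv.swap b b' * π)
    ?_ ?_ ?_ ?_
  · intro π hπ
    simp only [Finset.mem_coe, mem_filter, mem_univ, true_and] at hπ ⊢
    simp [Perm.mul_apply, hπ.1, hπ.2, Equiv.swap_apply_of_ne_of_ne hb.symm hb'.symm]
  · intro π hπ
    simp only [Finset.mem_coe, mem_filter, mem_univ, true_and] at hπ ⊢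
    simp [Perm.mul_apply, hπ.1, hπ.2, Equiv.swap_apply_of_ne_of_ne hb.symm hb'.symm,
      Equiv.swap_apply_right]
  · intro π _; simp [← mul_assoc]
  · intro π _; simp [← mul_assoc]

private lemma card_perm_fix2 {n : ℕ} {i i' : Fin n} (h : i ≠ i') (a : Fin n) {b : Fin n}
    (hab : b ≠ a) :
    (univ.filter fun π : Perm (Fin n) => π i = a ∧ π i' = b).card = (n - 2).factorial := by
  classical
  have hn : 1 < n := by
    have : Nontrivial (Fin n) := ⟨⟨i, i', h⟩⟩
    simpa using Fintype.one_lt_card (α := Fin n)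
  have hsplit := fiber_split i' ((univ : Finset (Perm (Fin n))).filter fun π => π i = a)
  simp only [Finset.filter_filter] at hsplit
  rw [card_perm_fix i a] at hsplit
  -- the fiber at b' = a is empty
  have hzero : (univ.filter fun π : Perm (Fin n) => π i = a ∧ π i' = a).card = 0 := by
    rw [Finset.card_eq_zero, Finset.filter_eq_empty_iff]
    intro π _
    rintro ⟨h1, h2⟩
    exact h (π.injective (h1.trans h2.symm))
  rw [← Finset.sum_erase_add _ _ (Finset.mem_univ a), hzero, add_zero] at hsplit
  have hconst : ∀ b' ∈ (univ : Finset (Fin n)).erase a,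
      (univ.filter fun π : Perm (Fin n) => π i = a ∧ π i' = b').card
        = (univ.filter fun π : Perm (Fin n) => π i = a ∧ π i' = b).card := by
    intro b' hb'
    exact fix2_card_eq i i' a (Finset.ne_of_mem_erase hb') hab
  rw [Finset.sum_congr rfl hconst, Finset.sum_const, smul_eq_mul, Finset.card_erase_of_mem
    (Finset.mem_univ a), Finset.card_univ, Fintype.card_fin] at hsplit
  have hpos : 0 < n - 1 := by omega
  have hfac : (n - 1).factorial = (n - 1) * (n - 2).factorial := by
    have := Nat.mul_factorial_pred hpos.ne'
    simpa [show n - 1 - 1 = n - 2 by omega] using this.symm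
  rw [hfac] at hsplit
  exact (Nat.eq_of_mul_eq_mul_left hpos hsplit).symm

set_option maxHeartbeats 1000000 in
private lemma fiber_split2 {n : ℕ} (i i' : Fin n) (s : Finset (Equiv.Perm (Fin n))) :
    s.card = ∑ p : Fin n × Fin n, (s.filter fun π => (π i, π i') = p).card :=
  Finset.card_eq_sum_card_fiberwise (f := fun π : Equiv.Perm (Fin n) => (π i, π i')) (fun _ _ => Finset.mem_univ _)

private lemma card_mem {n : ℕ} (i : Fin n) (s : Finset (Fin n)) :
    (univ.filter fun π : Perm (Fin n) => π i ∈ s).card = s.card * (n - 1).factorial := by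
  classical
  have h := fiber_split i ((univ : Finset (Perm (Fin n))).filter fun π => π i ∈ s)
  simp only [Finset.filter_filter] at h
  have h2 : ∀ j' : Fin n, (univ.filter fun π : Perm (Fin n) => π i ∈ s ∧ π i = j').card
      = if j' ∈ s then (n - 1).factorial else 0 := by
    intro j'
    by_cases hj : j' ∈ s
    · rw [if_pos hj, ← card_perm_fix i j']
      congr 1
      apply Finset.filter_congr
      intro π _
      constructor
      · exact fun hh => hh.2
      · exact fun hh => ⟨hh ▸ hj, hh⟩
    · rw [if_neg hj, Finset.card_eq_zero, Finset.filter_eq_empty_iff]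
      rintro π _ ⟨h1, h2⟩
      exact hj (h2 ▸ h1)
  rw [h, Finset.sum_congr rfl (fun j' _ => h2 j'), Finset.sum_ite_mem, Finset.univ_inter,
    Finset.sum_const, smul_eq_mul]

private lemma card_mem2 {n : ℕ} {i i' : Fin n} (h : i ≠ i') (s s' : Finset (Fin n)) :
    (univ.filter fun π : Perm (Fin n) => π i ∈ s ∧ π i' ∈ s').card
      ≤ s.card * s'.card * (n - 2).factorial := by
  classical
  have hsp := fiber_split2 i i' ((univ : Finset (Perm (Fin n))).filter
    fun π => π i ∈ s ∧ π i' ∈ s')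
  simp only [Finset.filter_filter] at hsp
  have hb : ∀ p : Fin n × Fin n,
      (univ.filter fun π : Perm (Fin n) => (π i ∈ s ∧ π i' ∈ s') ∧ (π i, π i') = p).card
        ≤ if p ∈ s ×ˢ s' then (n - 2).factorial else 0 := by
    intro p
    by_cases hmem : p ∈ s ×ˢ s'
    · rw [if_pos hmem]
      by_cases hpp : p.2 = p.1
      · have : (univ.filter fun π : Perm (Fin n) =>
            (π i ∈ s ∧ π i' ∈ s') ∧ (π i, π i') = p).card = 0 := by
          rw [Finset.card_eq_zero, Finset.filter_eq_empty_iff]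
          rintro π _ ⟨-, h2⟩
          have e1 : π i = p.1 := congrArg Prod.fst h2
          have e2 : π i' = p.2 := congrArg Prod.snd h2
          exact h (π.injective (by rw [e1, e2, hpp]))
        rw [this]; exact Nat.zero_le _
      · have : (univ.filter fun π : Perm (Fin n) =>
            (π i ∈ s ∧ π i' ∈ s') ∧ (π i, π i') = p)
            = (univ.filter fun π : Perm (Fin n) => π i = p.1 ∧ π i' = p.2) := by
          apply Finset.filter_congr
          intro π _
          rw [Finset.mem_product] at hmem
          constructor
          · rintro ⟨-, h2⟩
            exact ⟨congrArg Prod.fst h2, congrArg Prod.snd h2⟩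
          · rintro ⟨h1, h2⟩
            exact ⟨⟨h1 ▸ hmem.1, h2 ▸ hmem.2⟩, by rw [h1, h2]⟩
        rw [this, card_perm_fix2 h p.1 hpp]
    · rw [if_neg hmem]
      have : (univ.filter fun π : Perm (Fin n) =>
          (π i ∈ s ∧ π i' ∈ s') ∧ (π i, π i') = p).card = 0 := by
        rw [Finset.card_eq_zero, Finset.filter_eq_empty_iff]
        rintro π _ ⟨h1, h2⟩
        apply hmem
        rw [Finset.mem_product]
        have e1 : π i = p.1 := congrArg Prod.fst h2
        have e2 : π i' = p.2 := congrArg Prod.snd h2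
        exact ⟨e1 ▸ h1.1, e2 ▸ h1.2⟩
      rw [this]
  calc (univ.filter fun π : Perm (Fin n) => π i ∈ s ∧ π i' ∈ s').card
      = ∑ p : Fin n × Fin n, (univ.filter fun π : Perm (Fin n) =>
          (π i ∈ s ∧ π i' ∈ s') ∧ (π i, π i') = p).card := hsp
    _ ≤ ∑ p : Fin n × Fin n, if p ∈ s ×ˢ s' then (n - 2).factorial else 0 :=
        Finset.sum_le_sum (fun p _ => hb p)
    _ = s.card * s'.card * (n - 2).factorial := by
        rw [Finset.sum_ite_mem, Finset.univ_inter, Finset.sum_const, smul_eq_mul,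
          Finset.card_product]



private lemma F_eq {n : ℕ} (Xf : Finset (Fin n)) (G : Fin n → Finset (Fin n))
    (π : Perm (Fin n)) :
    (univ.filter fun i : Fin n => i ∈ Xf ∧ π i ∈ G i).card
      = ∑ i ∈ Xf, if π i ∈ G i then 1 else 0 := by
  classical
  rw [Finset.card_filter]
  rw [← Finset.filter_univ_mem Xf, Finset.sum_filter]
  congr 1
  ext i
  by_cases h1 : i ∈ Xf <;> by_cases h2 : π i ∈ G i <;> simp [h1, h2]

private lemma sum_F {n : ℕ} (Xf : Finset (Fin n)) (G : Fin n → Finset (Fin n)) :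
    ∑ π : Perm (Fin n), (univ.filter fun i : Fin n => i ∈ Xf ∧ π i ∈ G i).card
      = (∑ i ∈ Xf, (G i).card) * (n - 1).factorial := by
  classical
  calc ∑ π : Perm (Fin n), (univ.filter fun i : Fin n => i ∈ Xf ∧ π i ∈ G i).card
      = ∑ π : Perm (Fin n), ∑ i ∈ Xf, if π i ∈ G i then 1 else 0 :=
        Finset.sum_congr rfl (fun π _ => F_eq Xf G π)
    _ = ∑ i ∈ Xf, ∑ π : Perm (Fin n), if π i ∈ G i then 1 else 0 := Finset.sum_comm
    _ = ∑ i ∈ Xf, (univ.filter fun π : Perm (Fin n) => π i ∈ G i).card :=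
        Finset.sum_congr rfl (fun i _ => (Finset.card_filter _ _).symm)
    _ = ∑ i ∈ Xf, (G i).card * (n - 1).factorial :=
        Finset.sum_congr rfl (fun i _ => card_mem i (G i))
    _ = (∑ i ∈ Xf, (G i).card) * (n - 1).factorial := (Finset.sum_mul ..).symm

private lemma sum_F_sq {n : ℕ} (Xf : Finset (Fin n)) (G : Fin n → Finset (Fin n)) :
    ∑ π : Perm (Fin n), ((univ.filter fun i : Fin n => i ∈ Xf ∧ π i ∈ G i).card) ^ 2
      ≤ (∑ i ∈ Xf, (G i).card) * (n - 1).factorial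
          + (∑ i ∈ Xf, (G i).card) ^ 2 * (n - 2).factorial := by
  classical
  have expand : ∀ π : Perm (Fin n),
      ((univ.filter fun i : Fin n => i ∈ Xf ∧ π i ∈ G i).card) ^ 2
        = ∑ i ∈ Xf, ∑ i' ∈ Xf, if π i ∈ G i ∧ π i' ∈ G i' then 1 else 0 := by
    intro π
    rw [F_eq Xf G π, sq, Finset.sum_mul_sum]
    refine Finset.sum_congr rfl fun i _ => Finset.sum_congr rfl fun i' _ => ?_
    by_cases h1 : π i ∈ G i <;> by_cases h2 : π i' ∈ G i' <;> simp [h1, h2]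
  have swap : ∑ π : Perm (Fin n), ((univ.filter fun i : Fin n => i ∈ Xf ∧ π i ∈ G i).card) ^ 2
      = ∑ i ∈ Xf, ∑ i' ∈ Xf,
          (univ.filter fun π : Perm (Fin n) => π i ∈ G i ∧ π i' ∈ G i').card := by
    rw [Finset.sum_congr rfl (fun π _ => expand π)]
    rw [Finset.sum_comm]
    refine Finset.sum_congr rfl fun i _ => ?_
    rw [Finset.sum_comm]
    exact Finset.sum_congr rfl fun i' _ => (Finset.card_filter _ _).symm
  rw [swap]
  have hbound : ∀ i ∈ Xf, ∑ i' ∈ Xf,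
      (univ.filter fun π : Perm (Fin n) => π i ∈ G i ∧ π i' ∈ G i').card
        ≤ (G i).card * (n - 1).factorial
          + (G i).card * (∑ i' ∈ Xf, (G i').card) * (n - 2).factorial := by
    intro i hi
    rw [← Finset.sum_erase_add _ _ hi]
    have hdiag : (univ.filter fun π : Perm (Fin n) => π i ∈ G i ∧ π i ∈ G i).card
        = (G i).card * (n - 1).factorial := by
      rw [← card_mem i (G i)]
      congr 1
      apply Finset.filter_congr
      intro π _
      exact and_self_iff
    have hoff : ∑ i' ∈ Xf.erase i,
        (univ.filter fun π : Perm (Fin n) => π i ∈ G i ∧ π i' ∈ G i').card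
          ≤ (G i).card * (∑ i' ∈ Xf, (G i').card) * (n - 2).factorial := by
      calc ∑ i' ∈ Xf.erase i,
          (univ.filter fun π : Perm (Fin n) => π i ∈ G i ∧ π i' ∈ G i').card
          ≤ ∑ i' ∈ Xf.erase i, (G i).card * (G i').card * (n - 2).factorial :=
            Finset.sum_le_sum fun i' hi' =>
              card_mem2 (fun hh => (Finset.ne_of_mem_erase hi') hh.symm) (G i) (G i')
        _ ≤ ∑ i' ∈ Xf, (G i).card * (G i').card * (n - 2).factorial :=
            Finset.sum_le_sum_of_subset (Finset.erase_subset _ _)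
        _ = (G i).card * (∑ i' ∈ Xf, (G i').card) * (n - 2).factorial := by
            rw [← Finset.sum_mul, ← Finset.mul_sum]
    omega
  calc ∑ i ∈ Xf, ∑ i' ∈ Xf,
      (univ.filter fun π : Perm (Fin n) => π i ∈ G i ∧ π i' ∈ G i').card
      ≤ ∑ i ∈ Xf, ((G i).card * (n - 1).factorial
          + (G i).card * (∑ i' ∈ Xf, (G i').card) * (n - 2).factorial) :=
        Finset.sum_le_sum hbound
    _ = (∑ i ∈ Xf, (G i).card) * (n - 1).factorial
          + (∑ i ∈ Xf, (G i).card) ^ 2 * (n - 2).factorial := by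
        rw [Finset.sum_add_distrib, ← Finset.sum_mul]
        congr 1
        rw [sq, ← Finset.sum_mul, ← Finset.sum_mul]



private lemma variance_bound {n : ℕ} (hn : 2 ≤ n) (Xf : Finset (Fin n))
    (G : Fin n → Finset (Fin n)) :
    ∑ π : Perm (Fin n),
      (((univ.filter fun i : Fin n => i ∈ Xf ∧ π i ∈ G i).card : ℝ)
        - (∑ i ∈ Xf, ((G i).card : ℝ)) / n) ^ 2
      ≤ 3 * n * n.factorial := by
  classical
  set T : ℕ := ∑ i ∈ Xf, (G i).card with hT
  have hTcast : ∑ i ∈ Xf, ((G i).card : ℝ) = (T : ℝ) := by rw [hT]; push_cast; ring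
  set F : Perm (Fin n) → ℕ := fun π => (univ.filter fun i : Fin n => i ∈ Xf ∧ π i ∈ G i).card
    with hF
  have hnR : (2 : ℝ) ≤ n := by exact_mod_cast hn
  have hnpos : (0 : ℝ) < n := by linarith
  -- expansion
  have hcardP : ((univ : Finset (Perm (Fin n))).card : ℝ) = (n.factorial : ℝ) := by
    rw [Finset.card_univ, Fintype.card_perm, Fintype.card_fin]
  have expand : ∑ π : Perm (Fin n), ((F π : ℝ) - (T : ℝ) / n) ^ 2
      = (∑ π : Perm (Fin n), (F π : ℝ) ^ 2)
        - 2 * ((T : ℝ) / n) * (∑ π : Perm (Fin n), (F π : ℝ))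
        + (n.factorial : ℝ) * ((T : ℝ) / n) ^ 2 := by
    rw [← hcardP]
    rw [Finset.sum_congr rfl (fun π _ => by ring :
      ∀ π ∈ (univ : Finset (Perm (Fin n))),
        ((F π : ℝ) - (T : ℝ) / n) ^ 2
          = (F π : ℝ) ^ 2 - 2 * ((T : ℝ) / n) * (F π : ℝ) + ((T : ℝ) / n) ^ 2)]
    rw [Finset.sum_add_distrib, Finset.sum_sub_distrib, ← Finset.mul_sum, Finset.sum_const,
      nsmul_eq_mul]
  have hS : ∑ π : Perm (Fin n), (F π : ℝ) = (T : ℝ) * ((n - 1).factorial : ℝ) := by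
    rw [← Nat.cast_sum, sum_F Xf G]; push_cast; rw [hTcast]
  have hQ : ∑ π : Perm (Fin n), (F π : ℝ) ^ 2
      ≤ (T : ℝ) * ((n - 1).factorial : ℝ) + (T : ℝ) ^ 2 * ((n - 2).factorial : ℝ) := by
    have := sum_F_sq Xf G
    calc ∑ π : Perm (Fin n), (F π : ℝ) ^ 2
        = ((∑ π : Perm (Fin n), (F π) ^ 2 : ℕ) : ℝ) := by push_cast; ring
      _ ≤ _ := by exact_mod_cast this
  -- numeric facts
  have hfac1 : (n.factorial : ℝ) = n * ((n - 1).factorial : ℝ) := by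
    rw [← Nat.mul_factorial_pred (by omega : n ≠ 0)]; push_cast; ring
  have hfac2 : ((n - 1).factorial : ℝ) = ((n : ℝ) - 1) * ((n - 2).factorial : ℝ) := by
    have h1 : (n - 1).factorial = (n - 1) * (n - 2).factorial := by
      have := Nat.mul_factorial_pred (by omega : n - 1 ≠ 0)
      simpa [show n - 1 - 1 = n - 2 by omega] using this.symm
    rw [h1]
    push_cast [Nat.cast_sub (by omega : 1 ≤ n)]
    ring
  have hTle : (T : ℝ) ≤ (n : ℝ) ^ 2 := by
    have : T ≤ n * n := by
      calc T ≤ ∑ _i ∈ Xf, n := Finset.sum_le_sum fun i _ => by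
              simpa using Finset.card_le_univ (G i)
        _ = Xf.card * n := by rw [Finset.sum_const, smul_eq_mul]
        _ ≤ n * n := by
            have : Xf.card ≤ n := by simpa using Finset.card_le_univ Xf
            exact Nat.mul_le_mul_right n this
    calc (T : ℝ) ≤ ((n * n : ℕ) : ℝ) := by exact_mod_cast this
      _ = (n : ℝ) ^ 2 := by push_cast; ring
  have hTnn : (0 : ℝ) ≤ (T : ℝ) := Nat.cast_nonneg T
  have hann : (0 : ℝ) ≤ ((n - 2).factorial : ℝ) := Nat.cast_nonneg _
  -- put together
  rw [hTcast, expand, hS]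
  set a : ℝ := ((n - 2).factorial : ℝ)
  set Tr : ℝ := (T : ℝ)
  have key : (∑ π : Perm (Fin n), (F π : ℝ) ^ 2)
      - 2 * (Tr / n) * (Tr * ((n - 1).factorial : ℝ))
      + (n.factorial : ℝ) * (Tr / n) ^ 2
      ≤ Tr * ((n - 1).factorial : ℝ) + Tr ^ 2 * a - Tr ^ 2 * ((n : ℝ) - 1) * a / n := by
    have e1 : 2 * (Tr / n) * (Tr * ((n - 1).factorial : ℝ))
        - (n.factorial : ℝ) * (Tr / n) ^ 2 = Tr ^ 2 * ((n : ℝ) - 1) * a / n := by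
      rw [hfac1, hfac2]
      field_simp
      ring
    linarith [hQ, e1]
  refine le_trans key ?_
  have hTr2 : Tr ^ 2 ≤ (n : ℝ) ^ 4 := by
    calc Tr ^ 2 ≤ ((n : ℝ) ^ 2) ^ 2 := by nlinarith
      _ = (n : ℝ) ^ 4 := by ring
  have h1 : Tr * ((n - 1).factorial : ℝ) ≤ (n : ℝ) * (n.factorial : ℝ) := by
    rw [hfac1]
    have : (0 : ℝ) ≤ ((n - 1).factorial : ℝ) := Nat.cast_nonneg _
    calc Tr * ((n - 1).factorial : ℝ) ≤ (n : ℝ) ^ 2 * ((n - 1).factorial : ℝ) := by nlinarith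
      _ = (n : ℝ) * ((n : ℝ) * ((n - 1).factorial : ℝ)) := by ring
  have h2 : Tr ^ 2 * a - Tr ^ 2 * ((n : ℝ) - 1) * a / n ≤ 2 * (n : ℝ) * (n.factorial : ℝ) := by
    have e2 : Tr ^ 2 * a - Tr ^ 2 * ((n : ℝ) - 1) * a / n = Tr ^ 2 * a / n := by
      field_simp; ring
    rw [e2, hfac1, hfac2]
    rw [div_le_iff₀ hnpos]
    -- Tr^2 * a ≤ 2n * (n(n-1)a) * n
    nlinarith [mul_nonneg (mul_nonneg hTnn hTnn) hann, hTr2, hnR, hann,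
      mul_le_mul_of_nonneg_right hTr2 hann]
  linarith



/-- Lemma 2.3(ii) (`l:rand-match`): for every `δ > 0` there is `C > 0` such that for every
bipartite graph with parts `X = {x_1,…,x_n}`, `Y = {y_1,…,y_n}` (adjacency relation
`A i j`) in which every vertex of `X` has degree exactly `n − t` (`0 ≤ t ≤ n`), and every
`X* ⊆ X`, `Y* ⊆ Y`, a uniformly random permutation `π` satisfies, with probability at
least `1 − C/n` (i.e., for at least `(1 − C/n)·n!` of the `n!` permutations), that the
number of indices `i` with `x_i ∈ X*`, `y_{π(i)} ∈ Y*` and `x_i y_{π(i)}` an edge is at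
least `|X*|(|Y*| − t)/n − δn`. -/
theorem stmt_11 (δ : ℝ) (hδ : 0 < δ) :
    ∃ C : ℝ, 0 < C ∧ ∀ n t : ℕ, 0 < n → t ≤ n →
      ∀ A : Fin n → Fin n → Prop,
        (∀ i : Fin n, ({j | A i j} : Set (Fin n)).ncard = n - t) →
        ∀ Xs Ys : Set (Fin n),
          (1 - C / n) * (Nat.factorial n) ≤
            (({π : Equiv.Perm (Fin n) |
                (Xs.ncard : ℝ) * ((Ys.ncard : ℝ) - t) / n - δ * n ≤
                  (({i | i ∈ Xs ∧ π i ∈ Ys ∧ A i (π i)} : Set (Fin n)).ncard : ℝ)} :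
              Set (Equiv.Perm (Fin n))).ncard : ℝ) := by
  classical
  refine ⟨3 / δ ^ 2 + 1, by positivity, ?_⟩
  intro n t hn ht A hA Xs Ys
  set C : ℝ := 3 / δ ^ 2 + 1 with hC
  have hC1 : 1 ≤ C := by
    rw [hC]
    have : 0 ≤ 3 / δ ^ 2 := by positivity
    linarith
  set Xf : Finset (Fin n) := univ.filter (· ∈ Xs) with hXf
  set Yf : Finset (Fin n) := univ.filter (· ∈ Ys) with hYf
  set G : Fin n → Finset (Fin n) := fun i => univ.filter fun j => j ∈ Ys ∧ A i j with hG
  have hXcard : Xs.ncard = Xf.card := by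
    rw [Set.ncard_eq_toFinset_card']; congr 1; ext x; simp [hXf]
  have hYcard : Ys.ncard = Yf.card := by
    rw [Set.ncard_eq_toFinset_card']; congr 1; ext x; simp [hYf]
  have hFcard : ∀ π : Perm (Fin n),
      ({i | i ∈ Xs ∧ π i ∈ Ys ∧ A i (π i)} : Set (Fin n)).ncard
        = (univ.filter fun i : Fin n => i ∈ Xf ∧ π i ∈ G i).card := by
    intro π
    rw [Set.ncard_eq_toFinset_card']; congr 1; ext x; simp only [Set.mem_toFinset, Set.mem_setOf_eq, Finset.mem_filter, Finset.mem_univ, true_and, hXf, hG]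
  set μ : ℝ := (Xs.ncard : ℝ) * ((Ys.ncard : ℝ) - t) / n with hμ
  have hgoalcard : (({π : Equiv.Perm (Fin n) |
      μ - δ * n ≤ (({i | i ∈ Xs ∧ π i ∈ Ys ∧ A i (π i)} : Set (Fin n)).ncard : ℝ)} :
        Set (Equiv.Perm (Fin n))).ncard)
      = (univ.filter fun π : Perm (Fin n) =>
          μ - δ * n ≤ ((univ.filter fun i : Fin n => i ∈ Xf ∧ π i ∈ G i).card : ℝ)).card := by
    rw [Set.ncard_eq_toFinset_card']; congr 1; ext π
    simp only [Set.mem_toFinset, Set.mem_setOf_eq, Finset.mem_filter, Finset.mem_univ, true_and]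
    rw [hFcard π]
  rw [hgoalcard]
  set Good : Finset (Perm (Fin n)) := univ.filter fun π : Perm (Fin n) =>
      μ - δ * n ≤ ((univ.filter fun i : Fin n => i ∈ Xf ∧ π i ∈ G i).card : ℝ) with hGood
  set Bad : Finset (Perm (Fin n)) := univ.filter fun π : Perm (Fin n) =>
      ¬ (μ - δ * n ≤ ((univ.filter fun i : Fin n => i ∈ Xf ∧ π i ∈ G i).card : ℝ)) with hBad
  have hsplit : Good.card + Bad.card = n.factorial := by
    rw [hGood, hBad, Finset.card_filter_add_card_filter_not, Finset.card_univ,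
      Fintype.card_perm, Fintype.card_fin]
  by_cases hn2 : 2 ≤ n
  · -- main case
    have hnR : (2 : ℝ) ≤ n := by exact_mod_cast hn2
    have hnpos : (0 : ℝ) < n := by linarith
    -- lower bound on G i cards
    have hGi : ∀ i : Fin n, Yf.card + (n - t) ≤ (G i).card + n := by
      intro i
      have hNi : (univ.filter fun j => A i j).card = n - t := by
        have h1 := hA i
        rw [Set.ncard_eq_toFinset_card'] at h1
        rw [← h1]; congr 1; ext x; simp
      have hun : G i = Yf ∩ (univ.filter fun j => A i j) := by
        ext j; simp [hG, hYf]
      have hcui := Finset.card_union_add_card_inter Yf (univ.filter fun j => A i j)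
      have hle : (Yf ∪ univ.filter fun j => A i j).card ≤ n := by
        calc (Yf ∪ univ.filter fun j => A i j).card ≤ (univ : Finset (Fin n)).card :=
              Finset.card_le_univ _
          _ = n := by rw [Finset.card_univ, Fintype.card_fin]
      rw [hun, hNi] at *
      omega
    have hGiR : ∀ i : Fin n, (Yf.card : ℝ) - t ≤ ((G i).card : ℝ) := by
      intro i
      have h1 := hGi i
      have h2 : ((Yf.card + (n - t) : ℕ) : ℝ) ≤ (((G i).card + n : ℕ) : ℝ) := by
        exact_mod_cast h1
      push_cast [Nat.cast_sub ht] at h2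
      linarith
    set T : ℝ := ∑ i ∈ Xf, ((G i).card : ℝ) with hT
    have hnum : (Xf.card : ℝ) * ((Yf.card : ℝ) - t) ≤ T := by
      rw [hT]
      calc (Xf.card : ℝ) * ((Yf.card : ℝ) - t)
          = ∑ _i ∈ Xf, ((Yf.card : ℝ) - t) := by rw [Finset.sum_const, nsmul_eq_mul]
        _ ≤ ∑ i ∈ Xf, ((G i).card : ℝ) := Finset.sum_le_sum fun i _ => hGiR i
    have hμT : μ ≤ T / n := by
      rw [hμ, hXcard, hYcard]
      exact div_le_div_of_nonneg_right hnum hnpos.le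
    have hvar := variance_bound hn2 Xf G
    rw [← hT] at hvar
    have hfacnn : (0 : ℝ) ≤ (n.factorial : ℝ) := Nat.cast_nonneg _
    have hBadBound : (Bad.card : ℝ) * (δ * n) ^ 2 ≤ 3 * n * n.factorial := by
      have hstep : ∀ π ∈ Bad, (δ * n) ^ 2
          ≤ (((univ.filter fun i : Fin n => i ∈ Xf ∧ π i ∈ G i).card : ℝ) - T / n) ^ 2 := by
        intro π hπ
        rw [hBad, Finset.mem_filter] at hπ
        have h1 : ((univ.filter fun i : Fin n => i ∈ Xf ∧ π i ∈ G i).card : ℝ) < μ - δ * n :=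
          not_le.mp hπ.2
        have h2 : δ * n ≤ T / n - ((univ.filter fun i : Fin n => i ∈ Xf ∧ π i ∈ G i).card : ℝ) := by
          linarith
        have h3 : (0 : ℝ) ≤ δ * n := by positivity
        calc (δ * n) ^ 2
            ≤ (T / n - ((univ.filter fun i : Fin n => i ∈ Xf ∧ π i ∈ G i).card : ℝ)) ^ 2 := by
              nlinarith
          _ = (((univ.filter fun i : Fin n => i ∈ Xf ∧ π i ∈ G i).card : ℝ) - T / n) ^ 2 := by
              ring
      calc (Bad.card : ℝ) * (δ * n) ^ 2 = Bad.card • ((δ * n) ^ 2) := by rw [nsmul_eq_mul]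
        _ ≤ ∑ π ∈ Bad,
            (((univ.filter fun i : Fin n => i ∈ Xf ∧ π i ∈ G i).card : ℝ) - T / n) ^ 2 :=
            Finset.card_nsmul_le_sum Bad _ _ hstep
        _ ≤ ∑ π : Perm (Fin n),
            (((univ.filter fun i : Fin n => i ∈ Xf ∧ π i ∈ G i).card : ℝ) - T / n) ^ 2 :=
            Finset.sum_le_sum_of_subset_of_nonneg (Finset.subset_univ Bad)
              (fun _ _ _ => sq_nonneg _)
        _ ≤ 3 * n * n.factorial := hvar
    have hδn : (0 : ℝ) < (δ * n) ^ 2 := by positivity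
    have hBadle : (Bad.card : ℝ) ≤ C * n.factorial / n := by
      have hb1 : (Bad.card : ℝ) ≤ 3 * n * n.factorial / (δ * n) ^ 2 := by
        rw [le_div_iff₀ hδn]; exact hBadBound
      refine hb1.trans ?_
      rw [div_le_div_iff₀ hδn hnpos]
      have e2 : C * (n.factorial : ℝ) * (δ * n) ^ 2
          = (3 + δ ^ 2) * ((n : ℝ) ^ 2 * n.factorial) := by
        rw [hC]; field_simp
      rw [e2]
      have hprod : (0 : ℝ) ≤ δ ^ 2 * ((n : ℝ) ^ 2 * n.factorial) := by positivity
      nlinarith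
    have hG2 : (Good.card : ℝ) = (n.factorial : ℝ) - Bad.card := by
      have h : ((Good.card + Bad.card : ℕ) : ℝ) = (n.factorial : ℝ) := by exact_mod_cast hsplit
      push_cast at h
      linarith
    rw [hG2]
    have e3 : (1 - C / n) * (n.factorial : ℝ) = (n.factorial : ℝ) - C * n.factorial / n := by
      ring
    rw [e3]
    linarith
  · -- n = 1
    have hn1 : n = 1 := by omega
    have h0 : (1 - C / n) * (n.factorial : ℝ) ≤ 0 := by
      rw [hn1]
      simp only [Nat.cast_one, div_one, Nat.factorial_one, mul_one]
      linarith
    exact h0.trans (by positivity)
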